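/- Let G = (V, E_1, …, E_k) be a multilayer graph, W its combined wedge hypergraph with vertex weights w(n_e) = |{ i : e ∈ E_i }| + |{ i : e ∈ N_i }|, and C a vertex cover of W. For each i ∈ [k] define E_i^N = { e ∈ N_i : n_e ∈ C } and S_i = E_i ∖ { e ∈ E_i : n_e ∈ C }. Then each S_i fulfills the STC for E_i ∪ E_i^N, d_k(S_1,…,S_k) = 0, the sets E_i^N satisfy condition (3) of MinMultiLayerSTC+Variant, and Σ_{i∈[k]} |E_i^N ∪ (E_i∖S_i)| = Σ_{n_e ∈ C} w(n_e). -/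

import Mathlib

open Finset

/-- A wedge `(v, {u, w})` of an edge set `E`. -/
def IsWedge {V : Type*} (E : Finset (Sym2 V)) (v u w : V) : Prop :=
  u ≠ v ∧ v ≠ w ∧ u ≠ w ∧ s(u, v) ∈ E ∧ s(v, w) ∈ E ∧ s(u, w) ∉ E

/-- A labeling `S ⊆ E` fulfills the strong triadic closure for `E`. -/
def FulfillsSTC {V : Type*} (E S : Finset (Sym2 V)) : Prop :=
  ∀ u v w : V, u ≠ v → v ≠ w → u ≠ w → s(u, v) ∈ S → s(v, w) ∈ S → s(u, w) ∈ E

/-- `s(e)`: the number of layers in which `e` is labeled strong. -/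
def sCount {V : Type*} [DecidableEq V] {k : ℕ} (Ss : Fin k → Finset (Sym2 V))
    (e : Sym2 V) : ℕ :=
  (Finset.univ.filter fun i => e ∈ Ss i).card

/-- `w(e)`: the number of layers in which `e` is labeled weak. -/
def wCount {V : Type*} [DecidableEq V] {k : ℕ} (Es Ss : Fin k → Finset (Sym2 V))
    (e : Sym2 V) : ℕ :=
  (Finset.univ.filter fun i => e ∈ Es i ∧ e ∉ Ss i).card

/-- `d_k(S_1, …, S_k) = ∑_{e ∈ E, w(e) > 0} s(e)`: the number of disagreements. -/
def disagree {V : Type*} [DecidableEq V] {k : ℕ} (Es Ss : Fin k → Finset (Sym2 V)) : ℕ :=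
  ∑ e ∈ (Finset.univ.biUnion Es).filter (fun e => 0 < wCount Es Ss e), sCount Ss e

/-- `(V choose 2)`: the set of all 2-element subsets of `V`, as elements of `Sym2 V`. -/
def allPairs (V : Type*) [Fintype V] [DecidableEq V] : Finset (Sym2 V) :=
  Finset.univ.filter fun e => ¬ e.IsDiag

instance {V : Type*} [DecidableEq V] (E : Finset (Sym2 V)) (v u w : V) :
    Decidable (IsWedge E v u w) := by
  unfold IsWedge; infer_instance

/-- `N_i`: the candidate new edges of layer `i`, i.e. the non-edges `e` of layer `i`
such that `(v, e)` is a wedge of `E_i` for some `v`. -/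
def candNew {V : Type*} [Fintype V] [DecidableEq V] {k : ℕ}
    (Es : Fin k → Finset (Sym2 V)) (i : Fin k) : Finset (Sym2 V) :=
  (allPairs V \ Es i).filter fun e => ∃ v u w, IsWedge (Es i) v u w ∧ e = s(u, w)

/-- `C` (a set of vertices `n_e`, identified with the corresponding edges `e`) is a
vertex cover of the combined wedge hypergraph `W`: for every layer `i` and every wedge
`(v, {u, w}) ∈ 𝒲(E_i)`, `W` has the hyperedge `{n_{uv}, n_{vw}, n_{uw}}`, and a vertex
cover intersects every hyperedge. -/
def IsCombinedHypergraphVC {V : Type*} {k : ℕ} (Es : Fin k → Finset (Sym2 V))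
    (C : Finset (Sym2 V)) : Prop :=
  ∀ i : Fin k, ∀ v u w : V, IsWedge (Es i) v u w →
    s(u, v) ∈ C ∨ s(v, w) ∈ C ∨ s(u, w) ∈ C

/-- The weight `w(n_e) = |{i : e ∈ E_i}| + |{i : e ∈ N_i}|` of the vertex `n_e` of the
combined wedge hypergraph. -/
def hyperWeight {V : Type*} [Fintype V] [DecidableEq V] {k : ℕ}
    (Es : Fin k → Finset (Sym2 V)) (e : Sym2 V) : ℕ :=
  (Finset.univ.filter fun i => e ∈ Es i).card +
    (Finset.univ.filter fun i => e ∈ candNew Es i).card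

/-- Condition (3) of MinMultiLayerSTC+Variant. -/
def Cond3 {V : Type*} {k : ℕ} (Es ENs : Fin k → Finset (Sym2 V)) : Prop :=
  ∀ i j : Fin k, ∀ u w : V,
    s(u, w) ∈ ENs i → (∃ v, IsWedge (Es j) v u w) → s(u, w) ∈ ENs j

/-- From a vertex cover `C` of the combined wedge hypergraph, the new edge sets
`E_i^N = {e ∈ N_i : n_e ∈ C}` and labelings `S_i = E_i ∖ {e ∈ E_i : n_e ∈ C}` fulfill
the STC for `E_i ∪ E_i^N` in every layer, have no disagreements, satisfy condition (3)
of MinMultiLayerSTC+Variant, and `∑_i |E_i^N ∪ (E_i ∖ S_i)|` equals the weight of `C`. -/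
theorem hypergraph_vc_gives_stc_plus {V : Type*} [Fintype V] [DecidableEq V] {k : ℕ}
    (Es : Fin k → Finset (Sym2 V)) (C : Finset (Sym2 V))
    (hCsub : C ⊆ Finset.univ.biUnion (fun i => Es i ∪ candNew Es i))
    (hC : IsCombinedHypergraphVC Es C) :
    let ENs : Fin k → Finset (Sym2 V) := fun i => (candNew Es i).filter (fun e => e ∈ C)
    let Ss : Fin k → Finset (Sym2 V) := fun i => Es i \ (Es i).filter (fun e => e ∈ C)
    (∀ i, FulfillsSTC (Es i ∪ ENs i) (Ss i)) ∧
      disagree (fun i => Es i ∪ ENs i) Ss = 0 ∧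
      Cond3 Es ENs ∧
      (∑ i : Fin k, (ENs i ∪ (Es i \ Ss i)).card) = ∑ e ∈ C, hyperWeight Es e := by

  intro ENs Ss
  have hSsC : ∀ i e, e ∈ Ss i ↔ e ∈ Es i ∧ e ∉ C := by
    intro i e; simp only [Ss, Finset.mem_sdiff, Finset.mem_filter]; tauto
  have hENsC : ∀ i e, e ∈ ENs i ↔ e ∈ candNew Es i ∧ e ∈ C := by
    intro i e; simp [ENs]
  refine ⟨?_, ?_, ?_, ?_⟩
  · intro i u v w huv hvw huw h1 h2
    rw [hSsC] at h1 h2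
    by_cases hE : s(u, w) ∈ Es i
    · exact Finset.mem_union_left _ hE
    · have hw : IsWedge (Es i) v u w := ⟨huv, hvw, huw, h1.1, h2.1, hE⟩
      have hc : s(u, w) ∈ C := by
        rcases hC i v u w hw with h | h | h
        · exact absurd h h1.2
        · exact absurd h h2.2
        · exact h
      refine Finset.mem_union_right _ ?_
      rw [hENsC]
      refine ⟨?_, hc⟩
      simp only [candNew, allPairs, Finset.mem_filter, Finset.mem_sdiff,
        Finset.mem_univ, true_and]
      exact ⟨⟨by simp [huw], hE⟩, v, u, w, hw, rfl⟩
  · rw [disagree]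
    refine Finset.sum_eq_zero ?_
    intro e he
    rw [Finset.mem_filter] at he
    have heC : e ∈ C := by
      rcases Finset.card_pos.mp he.2 with ⟨i, hi⟩
      rw [Finset.mem_filter] at hi
      rcases Finset.mem_union.mp hi.2.1 with h | h
      · by_contra hnc
        exact hi.2.2 ((hSsC i e).mpr ⟨h, hnc⟩)
      · exact ((hENsC i e).mp h).2
    rw [sCount]
    rw [Finset.card_eq_zero]
    refine Finset.filter_eq_empty_iff.mpr ?_
    intro j _
    rw [hSsC]
    rintro ⟨-, hnc⟩
    exact hnc heC
  · intro i j u w hin ⟨v, hw⟩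
    rw [hENsC] at hin ⊢
    refine ⟨?_, hin.2⟩
    simp only [candNew, allPairs, Finset.mem_filter, Finset.mem_sdiff,
      Finset.mem_univ, true_and]
    exact ⟨⟨by simp [hw.2.2.1], hw.2.2.2.2.2⟩, v, u, w, hw, rfl⟩
  · have hdisj : ∀ i, Disjoint (ENs i) (Es i \ Ss i) := by
      intro i
      rw [Finset.disjoint_left]
      intro e he h2
      have := ((hENsC i e).mp he).1
      simp only [candNew, Finset.mem_filter, Finset.mem_sdiff] at this
      exact this.1.2 (Finset.mem_sdiff.mp h2).1
    have hEq : ∀ i, Es i \ Ss i = (Es i).filter (fun e => e ∈ C) := by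
      intro i
      ext e
      simp only [Finset.mem_sdiff, hSsC, Finset.mem_filter]
      tauto
    calc (∑ i : Fin k, (ENs i ∪ (Es i \ Ss i)).card)
        = ∑ i : Fin k, ((ENs i).card + (Es i \ Ss i).card) := by
          refine Finset.sum_congr rfl fun i _ => ?_
          exact Finset.card_union_of_disjoint (hdisj i)
      _ = ∑ i : Fin k, ((C.filter (fun e => e ∈ candNew Es i)).card
            + (C.filter (fun e => e ∈ Es i)).card) := by
          refine Finset.sum_congr rfl fun i _ => ?_
          rw [hEq i]
          congr 1
          · show ((candNew Es i).filter (fun e => e ∈ C)).card = _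
            rw [Finset.filter_mem_eq_inter, Finset.filter_mem_eq_inter,
              Finset.inter_comm]
          · rw [Finset.filter_mem_eq_inter, Finset.filter_mem_eq_inter,
              Finset.inter_comm]
      _ = ∑ i : Fin k, ∑ e ∈ C, ((if e ∈ candNew Es i then 1 else 0)
            + (if e ∈ Es i then 1 else 0)) := by
          refine Finset.sum_congr rfl fun i _ => ?_
          rw [Finset.card_filter, Finset.card_filter, Finset.sum_add_distrib]
      _ = ∑ e ∈ C, ∑ i : Fin k, ((if e ∈ candNew Es i then 1 else 0)
            + (if e ∈ Es i then 1 else 0)) := Finset.sum_comm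
      _ = ∑ e ∈ C, hyperWeight Es e := by
          refine Finset.sum_congr rfl fun e _ => ?_
          rw [hyperWeight, Finset.sum_add_distrib, Finset.card_filter,
            Finset.card_filter]
          exact Nat.add_comm _ _
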